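/- With p(ξ) := q(ξ₁)·(ξ₁² − 1, ξ₁ξ₂ − iξ₃, ξ₁ξ₃ + iξ₂) and q(t) := (1/8)√(15/π)(1 + √7 i t), one has ∫_{S²} p_j(ξ) · conj(p_k(ξ)) dσ(ξ) = δ_{jk} for all j, k ∈ {1, 2, 3}. -/

import Mathlib

open MeasureTheory Complex

noncomputable def qfun (t : ℝ) : ℂ :=
  (1 / 8 : ℂ) * (Real.sqrt (15 / Real.pi) : ℂ) * (1 + (Real.sqrt 7 : ℂ) * I * (t : ℂ))

noncomputable def pfun (ξ : Fin 3 → ℝ) : Fin 3 → ℂ :=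
  fun j =>
    qfun (ξ 0) *
      ![(ξ 0 : ℂ) ^ 2 - 1, (ξ 0 : ℂ) * (ξ 1 : ℂ) - I * (ξ 2 : ℂ),
        (ξ 0 : ℂ) * (ξ 2 : ℂ) + I * (ξ 1 : ℂ)] j

namespace Stmt6Aux

open Set Metric Measure

noncomputable section

abbrev E3 := EuclideanSpace ℝ (Fin 3)

def Gm (n : ℕ) : ℝ := ∫ x : ℝ, x ^ n * Real.exp (-x ^ 2)
def Rm (n : ℕ) : ℝ := ∫ x in Ioi (0:ℝ), x ^ n * Real.exp (-x ^ 2)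
def Sm (a b c : ℕ) : ℝ :=
  ∫ ξ : sphere (0 : E3) 1,
    ((ξ:E3) 0)^a * ((ξ:E3) 1)^b * ((ξ:E3) 2)^c ∂(volume.toSphere)

lemma norm_sq_E3 (x : E3) : ‖x‖^2 = (x 0)^2 + (x 1)^2 + (x 2)^2 := by
  rw [EuclideanSpace.norm_eq, Real.sq_sqrt (by positivity), Fin.sum_univ_three]
  simp [Real.norm_eq_abs, sq_abs]

lemma step1 (a b c : ℕ) :
    ∫ x : E3, (x 0)^a * (x 1)^b * (x 2)^c * Real.exp (-‖x‖^2) = Gm a * Gm b * Gm c := by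
  have mp := EuclideanSpace.volume_preserving_symm_measurableEquiv_toLp (Fin 3)
  have h := mp.integral_comp (MeasurableEquiv.measurableEmbedding _)
    (fun y : Fin 3 → ℝ => ∏ i, (y i) ^ (![a,b,c] i) * Real.exp (-(y i)^2))
  have h2 := MeasureTheory.integral_fintype_prod_eq_prod (𝕜 := ℝ) (ι := Fin 3) (μ := fun _ => volume)
    (f := fun i (t : ℝ) => t ^ (![a,b,c] i) * Real.exp (-t^2))
  rw [← volume_pi, ← h] at h2
  have h1 : ∫ x : E3, (x 0)^a * (x 1)^b * (x 2)^c * Real.exp (-‖x‖^2)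
      = ∫ x : E3, ∏ i, ((MeasurableEquiv.toLp 2 (Fin 3 → ℝ)).symm x i) ^ (![a,b,c] i)
          * Real.exp (-((MeasurableEquiv.toLp 2 (Fin 3 → ℝ)).symm x i)^2) := by
    refine integral_congr_ae (Filter.Eventually.of_forall fun x => ?_)
    dsimp only
    rw [norm_sq_E3, Fin.prod_univ_three]
    rw [show (-((x 0)^2 + (x 1)^2 + (x 2)^2)) = (-(x 0)^2) + (-(x 1)^2) + (-(x 2)^2) by ring,
      Real.exp_add, Real.exp_add]
    simp only [Matrix.cons_val_zero, Matrix.cons_val_one, Matrix.cons_val_two, Matrix.tail_cons, Matrix.head_cons]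
    change _ = (x 0) ^ a * Real.exp (-(x 0)^2) * ((x 1) ^ b * Real.exp (-(x 1)^2)) * ((x 2) ^ c * Real.exp (-(x 2)^2))
    ring
  have h3 : (∏ i, ∫ t : ℝ, t ^ (![a,b,c] i) * Real.exp (-t^2)) = Gm a * Gm b * Gm c := by
    rw [Fin.prod_univ_three]
    simp only [Matrix.cons_val_zero, Matrix.cons_val_one, Matrix.head_cons]
    rfl
  exact h1.trans (h2.trans h3)

lemma step2 (a b c : ℕ) :
    ∫ x : E3, (x 0)^a * (x 1)^b * (x 2)^c * Real.exp (-‖x‖^2)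
      = Sm a b c * Rm (a+b+c+2) := by
  have hdim : Module.finrank ℝ E3 - 1 = 2 := by simp
  have hpm := (volume : Measure E3).measurePreserving_homeomorphUnitSphereProd
  rw [hdim] at hpm
  have h := hpm.integral_comp (Homeomorph.measurableEmbedding _)
    (fun p : sphere (0:E3) 1 × Ioi (0:ℝ) =>
      (((p.1:E3) 0)^a * ((p.1:E3) 1)^b * ((p.1:E3) 2)^c) *
        ((p.2:ℝ)^(a+b+c) * Real.exp (-(p.2:ℝ)^2)))
  have hcongr : ∫ x : ({0}ᶜ : Set E3), ((x:E3) 0)^a * ((x:E3) 1)^b * ((x:E3) 2)^c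
          * Real.exp (-‖(x:E3)‖^2) ∂((volume : Measure E3).comap (↑))
      = ∫ x : ({0}ᶜ : Set E3),
          ((((homeomorphUnitSphereProd E3) x).1 : E3) 0)^a *
          ((((homeomorphUnitSphereProd E3) x).1 : E3) 1)^b *
          ((((homeomorphUnitSphereProd E3) x).1 : E3) 2)^c *
          ((((homeomorphUnitSphereProd E3) x).2 : ℝ)^(a+b+c) *
            Real.exp (-(((homeomorphUnitSphereProd E3) x).2 : ℝ)^2))
          ∂((volume : Measure E3).comap (↑)) := by
    refine integral_congr_ae (Filter.Eventually.of_forall fun x => ?_)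
    dsimp only [homeomorphUnitSphereProd_apply_fst_coe,
      homeomorphUnitSphereProd_apply_snd_coe]
    have hx : (x : E3) ≠ 0 := x.2
    have hn : ‖(x:E3)‖ ≠ 0 := norm_ne_zero_iff.2 hx
    simp only [homeomorphUnitSphereProd_apply_fst_coe, homeomorphUnitSphereProd_apply_snd_coe, PiLp.smul_apply, smul_eq_mul]
    field_simp
    rw [div_pow, div_pow, div_pow, pow_add, pow_add]
    field_simp
  calc ∫ x : E3, (x 0)^a * (x 1)^b * (x 2)^c * Real.exp (-‖x‖^2)
      = ∫ x : ({0}ᶜ : Set E3), ((x:E3) 0)^a * ((x:E3) 1)^b * ((x:E3) 2)^c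
          * Real.exp (-‖(x:E3)‖^2) ∂((volume : Measure E3).comap (↑)) := by
        rw [integral_subtype_comap (measurableSet_singleton _).compl
          (fun x : E3 => (x 0)^a * (x 1)^b * (x 2)^c * Real.exp (-‖x‖^2)),
          MeasureTheory.restrict_compl_singleton]
    _ = ∫ p : sphere (0:E3) 1 × Ioi (0:ℝ),
          (((p.1:E3) 0)^a * ((p.1:E3) 1)^b * ((p.1:E3) 2)^c) *
            ((p.2:ℝ)^(a+b+c) * Real.exp (-(p.2:ℝ)^2))
          ∂(volume.toSphere.prod (volumeIoiPow 2)) := by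
        exact hcongr.trans h
    _ = Sm a b c * Rm (a+b+c+2) := by
        rw [integral_prod_mul (μ := volume.toSphere) (ν := volumeIoiPow 2)
          (f := fun ξ : sphere (0:E3) 1 => ((ξ:E3) 0)^a * ((ξ:E3) 1)^b * ((ξ:E3) 2)^c)
          (g := fun r : Ioi (0:ℝ) => (r:ℝ)^(a+b+c) * Real.exp (-(r:ℝ)^2))]
        congr 1
        simp only [Measure.volumeIoiPow, ENNReal.ofReal]
        rw [integral_withDensity_eq_integral_smul
          (by exact (measurable_subtype_coe.pow_const _).real_toNNReal)]
        rw [integral_subtype_comap measurableSet_Ioi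
          (fun t : ℝ => (t^2).toNNReal • (t^(a+b+c) * Real.exp (-t^2)))]
        rw [Rm]
        refine setIntegral_congr_fun measurableSet_Ioi (fun x hx => ?_)
        rw [NNReal.smul_def, Real.coe_toNNReal _ (pow_nonneg hx.out.le 2)]
        rw [smul_eq_mul]
        ring

lemma Rm_eq (n : ℕ) : Rm n = Real.Gamma ((n+1)/2) / 2 := by
  have h := _root_.integral_rpow_mul_exp_neg_rpow (p := 2) (q := (n:ℝ)) (by norm_num [Fin.ext_iff])
    (by have := Nat.cast_nonneg (α := ℝ) n; linarith)
  rw [Rm, show Real.Gamma (((n:ℝ)+1)/2)/2 = 1/2 * Real.Gamma (((n:ℝ)+1)/2) by ring, ← h]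
  refine setIntegral_congr_fun measurableSet_Ioi (fun x hx => ?_)
  rw [Real.rpow_natCast, show ((2:ℝ)) = ((2:ℕ):ℝ) by norm_num, Real.rpow_natCast]

lemma Rm_pos (n : ℕ) : 0 < Rm n := by
  rw [Rm_eq]; positivity

lemma Gm_odd (n : ℕ) (h : Odd n) : Gm n = 0 := by
  have h1 : (∫ x : ℝ, (fun t : ℝ => t ^ n * Real.exp (-t ^ 2)) (-x))
      = ∫ x : ℝ, x ^ n * Real.exp (-x ^ 2) :=
    integral_neg_eq_self (fun t : ℝ => t ^ n * Real.exp (-t ^ 2)) volume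
  have h2 : ∀ x : ℝ, (-x) ^ n * Real.exp (-(-x) ^ 2) = -(x ^ n * Real.exp (-x ^ 2)) := by
    intro x
    rw [h.neg_pow, neg_sq]
    ring
  simp only [h2, integral_neg] at h1
  rw [Gm]
  linarith

lemma Gm_even (n : ℕ) (h : Even n) : Gm n = 2 * Rm n := by
  obtain ⟨m, rfl⟩ := h
  rw [← two_mul]
  have := integral_comp_abs (f := fun t : ℝ => t ^ (2*m) * Real.exp (-t ^ 2))
  rw [Gm, Rm, ← this]
  refine integral_congr_ae (Filter.Eventually.of_forall fun x => ?_)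
  simp [pow_mul, _root_.sq_abs]

lemma Rm0 : Rm 0 = Real.sqrt Real.pi / 2 := by
  rw [Rm_eq]; norm_num [Real.Gamma_one_half_eq]
lemma Rm2 : Rm 2 = Real.sqrt Real.pi / 4 := by
  rw [Rm_eq]
  rw [show ((2:ℕ)+1:ℝ)/2 = 1/2 + 1 by norm_num, Real.Gamma_add_one (by norm_num [Fin.ext_iff]),
    Real.Gamma_one_half_eq]
  ring
lemma Rm4 : Rm 4 = 3 * Real.sqrt Real.pi / 8 := by
  rw [Rm_eq]
  rw [show ((4:ℕ)+1:ℝ)/2 = (1/2 + 1) + 1 by norm_num, Real.Gamma_add_one (by norm_num [Fin.ext_iff]),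
    Real.Gamma_add_one (by norm_num [Fin.ext_iff]), Real.Gamma_one_half_eq]
  ring
lemma Rm6 : Rm 6 = 15 * Real.sqrt Real.pi / 16 := by
  rw [Rm_eq]
  rw [show ((6:ℕ)+1:ℝ)/2 = ((1/2 + 1) + 1) + 1 by norm_num, Real.Gamma_add_one (by norm_num [Fin.ext_iff]),
    Real.Gamma_add_one (by norm_num [Fin.ext_iff]), Real.Gamma_add_one (by norm_num [Fin.ext_iff]), Real.Gamma_one_half_eq]
  ring
lemma Rm8 : Rm 8 = 105 * Real.sqrt Real.pi / 32 := by
  rw [Rm_eq]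
  rw [show ((8:ℕ)+1:ℝ)/2 = (((1/2 + 1) + 1) + 1) + 1 by norm_num, Real.Gamma_add_one (by norm_num [Fin.ext_iff]),
    Real.Gamma_add_one (by norm_num [Fin.ext_iff]), Real.Gamma_add_one (by norm_num [Fin.ext_iff]),
    Real.Gamma_add_one (by norm_num [Fin.ext_iff]), Real.Gamma_one_half_eq]
  ring

lemma Gm0 : Gm 0 = Real.sqrt Real.pi := by
  rw [Gm_even 0 (by decide), Rm0]; ring
lemma Gm2 : Gm 2 = Real.sqrt Real.pi / 2 := by
  rw [Gm_even 2 (by decide), Rm2]; ring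
lemma Gm4 : Gm 4 = 3 * Real.sqrt Real.pi / 4 := by
  rw [Gm_even 4 (by decide), Rm4]; ring
lemma Gm6 : Gm 6 = 15 * Real.sqrt Real.pi / 8 := by
  rw [Gm_even 6 (by decide), Rm6]; ring

lemma Sm_eq (a b c : ℕ) : Sm a b c = Gm a * Gm b * Gm c / Rm (a+b+c+2) := by
  rw [eq_div_iff (Rm_pos _).ne']
  exact (step2 a b c).symm.trans (step1 a b c)

lemma Sm_odd_a {a : ℕ} (h : Odd a) (b c : ℕ) : Sm a b c = 0 := by
  rw [Sm_eq, Gm_odd a h]; simp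
lemma Sm_odd_b (a : ℕ) {b : ℕ} (h : Odd b) (c : ℕ) : Sm a b c = 0 := by
  rw [Sm_eq, Gm_odd b h]; simp
lemma Sm_odd_c (a b : ℕ) {c : ℕ} (h : Odd c) : Sm a b c = 0 := by
  rw [Sm_eq, Gm_odd c h]; simp

lemma sqrt_pi_sq : Real.sqrt Real.pi * Real.sqrt Real.pi = Real.pi :=
  Real.mul_self_sqrt Real.pi_nonneg
lemma sqrt_pi_ne : Real.sqrt Real.pi ≠ 0 :=
  ne_of_gt (Real.sqrt_pos.2 Real.pi_pos)

lemma Sm000 : Sm 0 0 0 = 4 * Real.pi := by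
  rw [show Sm 0 0 0 = Gm 0 * Gm 0 * Gm 0 / Rm 2 from Sm_eq 0 0 0, Gm0, Rm2]
  rw [div_eq_iff (by positivity)]
  linear_combination (Real.sqrt Real.pi) * sqrt_pi_sq
lemma Sm200 : Sm 2 0 0 = 4 * Real.pi / 3 := by
  rw [show Sm 2 0 0 = Gm 2 * Gm 0 * Gm 0 / Rm 4 from Sm_eq 2 0 0, Gm0, Gm2, Rm4]
  rw [div_eq_div_iff (by positivity) (by norm_num [Fin.ext_iff])]
  linear_combination ((3:ℝ)/2 * Real.sqrt Real.pi) * sqrt_pi_sq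
lemma Sm400 : Sm 4 0 0 = 4 * Real.pi / 5 := by
  rw [show Sm 4 0 0 = Gm 4 * Gm 0 * Gm 0 / Rm 6 from Sm_eq 4 0 0, Gm0, Gm4, Rm6]
  rw [div_eq_div_iff (by positivity) (by norm_num [Fin.ext_iff])]
  linear_combination ((15:ℝ)/4 * Real.sqrt Real.pi) * sqrt_pi_sq
lemma Sm600 : Sm 6 0 0 = 4 * Real.pi / 7 := by
  rw [show Sm 6 0 0 = Gm 6 * Gm 0 * Gm 0 / Rm 8 from Sm_eq 6 0 0, Gm0, Gm6, Rm8]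
  rw [div_eq_div_iff (by positivity) (by norm_num [Fin.ext_iff])]
  linear_combination ((105:ℝ)/8 * Real.sqrt Real.pi) * sqrt_pi_sq
lemma Sm020 : Sm 0 2 0 = 4 * Real.pi / 3 := by
  rw [show Sm 0 2 0 = Gm 0 * Gm 2 * Gm 0 / Rm 4 from Sm_eq 0 2 0, Gm0, Gm2, Rm4]
  rw [div_eq_div_iff (by positivity) (by norm_num [Fin.ext_iff])]
  linear_combination ((3:ℝ)/2 * Real.sqrt Real.pi) * sqrt_pi_sq
lemma Sm002 : Sm 0 0 2 = 4 * Real.pi / 3 := by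
  rw [show Sm 0 0 2 = Gm 0 * Gm 0 * Gm 2 / Rm 4 from Sm_eq 0 0 2, Gm0, Gm2, Rm4]
  rw [div_eq_div_iff (by positivity) (by norm_num [Fin.ext_iff])]
  linear_combination ((3:ℝ)/2 * Real.sqrt Real.pi) * sqrt_pi_sq
lemma Sm220 : Sm 2 2 0 = 4 * Real.pi / 15 := by
  rw [show Sm 2 2 0 = Gm 2 * Gm 2 * Gm 0 / Rm 6 from Sm_eq 2 2 0, Gm0, Gm2, Rm6]
  rw [div_eq_div_iff (by positivity) (by norm_num [Fin.ext_iff])]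
  linear_combination ((15:ℝ)/4 * Real.sqrt Real.pi) * sqrt_pi_sq
lemma Sm202 : Sm 2 0 2 = 4 * Real.pi / 15 := by
  rw [show Sm 2 0 2 = Gm 2 * Gm 0 * Gm 2 / Rm 6 from Sm_eq 2 0 2, Gm0, Gm2, Rm6]
  rw [div_eq_div_iff (by positivity) (by norm_num [Fin.ext_iff])]
  linear_combination ((15:ℝ)/4 * Real.sqrt Real.pi) * sqrt_pi_sq
lemma Sm420 : Sm 4 2 0 = 4 * Real.pi / 35 := by
  rw [show Sm 4 2 0 = Gm 4 * Gm 2 * Gm 0 / Rm 8 from Sm_eq 4 2 0, Gm0, Gm2, Gm4, Rm8]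
  rw [div_eq_div_iff (by positivity) (by norm_num [Fin.ext_iff])]
  linear_combination ((105:ℝ)/8 * Real.sqrt Real.pi) * sqrt_pi_sq
lemma Sm402 : Sm 4 0 2 = 4 * Real.pi / 35 := by
  rw [show Sm 4 0 2 = Gm 4 * Gm 0 * Gm 2 / Rm 8 from Sm_eq 4 0 2, Gm0, Gm2, Gm4, Rm8]
  rw [div_eq_div_iff (by positivity) (by norm_num [Fin.ext_iff])]
  linear_combination ((105:ℝ)/8 * Real.sqrt Real.pi) * sqrt_pi_sq

def mon (a b c : ℕ) (ξ : sphere (0 : E3) 1) : ℂ :=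
  ((ξ:E3) 0 : ℂ)^a * ((ξ:E3) 1 : ℂ)^b * ((ξ:E3) 2 : ℂ)^c

lemma cont_coord (i : Fin 3) : Continuous (fun ξ : sphere (0:E3) 1 => (ξ:E3) i) :=
  (continuous_apply i).comp ((by fun_prop : Continuous (fun y : E3 => y.ofLp)).comp continuous_subtype_val)

lemma int_mon (a b c : ℕ) : Integrable (mon a b c) (volume : Measure E3).toSphere := by
  apply Continuous.integrable_of_hasCompactSupport
  · unfold mon
    exact (((Complex.continuous_ofReal.comp (cont_coord 0)).pow a).mul
      ((Complex.continuous_ofReal.comp (cont_coord 1)).pow b)).mul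
        ((Complex.continuous_ofReal.comp (cont_coord 2)).pow c)
  · exact HasCompactSupport.of_compactSpace _

lemma integral_mon (a b c : ℕ) :
    ∫ ξ, mon a b c ξ ∂(volume : Measure E3).toSphere = (Sm a b c : ℂ) := by
  rw [show mon a b c
      = fun ξ : sphere (0:E3) 1 => ((((ξ:E3) 0)^a * ((ξ:E3) 1)^b * ((ξ:E3) 2)^c : ℝ) : ℂ) from
    funext fun ξ => by unfold mon; push_cast; ring]
  exact integral_ofReal

lemma icomb (l : List (ℂ × ℕ × ℕ × ℕ)) :
    ∫ ξ, (l.map (fun t => t.1 * mon t.2.1 t.2.2.1 t.2.2.2 ξ)).sum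
        ∂(volume : Measure E3).toSphere
      = (l.map (fun t => t.1 * (Sm t.2.1 t.2.2.1 t.2.2.2 : ℂ))).sum := by
  induction l with
  | nil => simp
  | cons h t ih =>
      have hint : ∀ l' : List (ℂ × ℕ × ℕ × ℕ), Integrable
          (fun ξ => (l'.map (fun t => t.1 * mon t.2.1 t.2.2.1 t.2.2.2 ξ)).sum)
          (volume : Measure E3).toSphere := by
        intro l'
        induction l' with
        | nil => simp [integrable_const]
        | cons h' t' ih' =>
            simp only [List.map_cons, List.sum_cons]
            exact (((int_mon _ _ _).const_mul _).add ih')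
      simp only [List.map_cons, List.sum_cons]
      rw [integral_add ((int_mon _ _ _).const_mul _) (hint t), integral_const_mul,
        integral_mon, ih]

lemma qconj (t : ℝ) : qfun t * (starRingEnd ℂ) (qfun t)
    = (15/(64*(Real.pi:ℂ))) * (1 + 7*(t:ℂ)^2) := by
  have h7 : ((Real.sqrt 7:ℝ):ℂ)^2 = 7 := by
    rw [← Complex.ofReal_pow, Real.sq_sqrt (by norm_num [Fin.ext_iff])]; norm_num
  have h15 : ((Real.sqrt (15/Real.pi):ℝ):ℂ)^2 = 15/(Real.pi:ℂ) := by
    rw [← Complex.ofReal_pow, Real.sq_sqrt (by positivity)]; push_cast; ring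
  have hI := Complex.I_sq
  unfold qfun
  rw [map_mul, map_mul, map_add (starRingEnd ℂ), map_mul (starRingEnd ℂ),
    map_mul (starRingEnd ℂ), map_one (starRingEnd ℂ), conj_ofReal, conj_ofReal,
    conj_ofReal, conj_I]
  rw [show (starRingEnd ℂ) (1/8) = 1/8 by simp [Complex.conj_ofNat]]
  linear_combination ((1 - ((Real.sqrt 7:ℝ):ℂ)^2*I^2*(t:ℂ)^2)/64) * h15
    + (-(15:ℂ)/(64*(Real.pi:ℂ))*(t:ℂ)^2*I^2) * h7
    + (-(105:ℂ)/(64*(Real.pi:ℂ))*(t:ℂ)^2) * hI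

lemma main_case (j k : Fin 3) (l : List (ℂ × ℕ × ℕ × ℕ))
    (hpt : ∀ ξ : sphere (0:E3) 1,
      pfun (fun i => (ξ : E3) i) j * (starRingEnd ℂ) (pfun (fun i => (ξ : E3) i) k)
        = (l.map (fun t => t.1 * mon t.2.1 t.2.2.1 t.2.2.2 ξ)).sum) :
    ∫ ξ : sphere (0 : E3) 1,
        pfun (fun i => (ξ : E3) i) j * (starRingEnd ℂ) (pfun (fun i => (ξ : E3) i) k)
        ∂(volume.toSphere)
      = (l.map (fun t => t.1 * (Sm t.2.1 t.2.2.1 t.2.2.2 : ℂ))).sum := by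
  rw [integral_congr_ae (Filter.Eventually.of_forall hpt), icomb]

lemma case00 :
    ∫ ξ : sphere (0 : E3) 1,
        pfun (fun i => (ξ : E3) i) 0 * (starRingEnd ℂ) (pfun (fun i => (ξ : E3) i) 0)
        ∂(volume.toSphere) = 1 := by
  refine (main_case 0 0 [((15/(64*(Real.pi:ℂ)))*7,6,0,0), (-(15/(64*(Real.pi:ℂ)))*13,4,0,0), ((15/(64*(Real.pi:ℂ)))*5,2,0,0), ((15/(64*(Real.pi:ℂ))),0,0,0)] ?_).trans ?_
  · intro ξ
    have hq := qconj ((ξ:E3) 0)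
    have hI := Complex.I_sq
    simp only [pfun, Matrix.cons_val_zero, mon, List.map_cons, List.sum_cons,
      List.map_nil, List.sum_nil, add_zero, pow_zero, pow_one, mul_one, one_mul]
    rw [map_mul (starRingEnd ℂ), map_sub (starRingEnd ℂ), map_pow (starRingEnd ℂ),
    map_one (starRingEnd ℂ), conj_ofReal]
    linear_combination ((((ξ:E3) 0:ℂ)^2 - 1)*(((ξ:E3) 0:ℂ)^2 - 1)) * hq
  · simp only [List.map_cons, List.sum_cons, List.map_nil, List.sum_nil, add_zero]
    rw [Sm600, Sm400, Sm200, Sm000]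
    push_cast
    have hπ : (Real.pi:ℂ) ≠ 0 := Complex.ofReal_ne_zero.2 Real.pi_ne_zero
    linear_combination mul_inv_cancel₀ hπ

lemma case11 :
    ∫ ξ : sphere (0 : E3) 1,
        pfun (fun i => (ξ : E3) i) 1 * (starRingEnd ℂ) (pfun (fun i => (ξ : E3) i) 1)
        ∂(volume.toSphere) = 1 := by
  refine (main_case 1 1 [((15/(64*(Real.pi:ℂ)))*7,4,2,0), ((15/(64*(Real.pi:ℂ))),2,2,0), ((15/(64*(Real.pi:ℂ)))*7,2,0,2), ((15/(64*(Real.pi:ℂ))),0,0,2)] ?_).trans ?_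
  · intro ξ
    have hq := qconj ((ξ:E3) 0)
    have hI := Complex.I_sq
    simp only [pfun, Matrix.cons_val_one, Matrix.cons_val_zero, Matrix.head_cons, mon, List.map_cons, List.sum_cons,
      List.map_nil, List.sum_nil, add_zero, pow_zero, pow_one, mul_one, one_mul]
    simp only [map_mul (starRingEnd ℂ), map_sub (starRingEnd ℂ), map_add (starRingEnd ℂ),
    map_pow (starRingEnd ℂ), map_one (starRingEnd ℂ), conj_ofReal, conj_I]
    linear_combination ((((ξ:E3) 0:ℂ)*((ξ:E3) 1:ℂ) - I*((ξ:E3) 2:ℂ))*(((ξ:E3) 0:ℂ)*((ξ:E3) 1:ℂ) + I*((ξ:E3) 2:ℂ))) * hq + (-(15/(64*(Real.pi:ℂ)))*(1+7*((ξ:E3) 0:ℂ)^2)*((ξ:E3) 2:ℂ)^2) * hI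
  · simp only [List.map_cons, List.sum_cons, List.map_nil, List.sum_nil, add_zero]
    rw [Sm420, Sm220, Sm202, Sm002]
    push_cast
    have hπ : (Real.pi:ℂ) ≠ 0 := Complex.ofReal_ne_zero.2 Real.pi_ne_zero
    linear_combination mul_inv_cancel₀ hπ

lemma case22 :
    ∫ ξ : sphere (0 : E3) 1,
        pfun (fun i => (ξ : E3) i) 2 * (starRingEnd ℂ) (pfun (fun i => (ξ : E3) i) 2)
        ∂(volume.toSphere) = 1 := by
  refine (main_case 2 2 [((15/(64*(Real.pi:ℂ)))*7,4,0,2), ((15/(64*(Real.pi:ℂ))),2,0,2), ((15/(64*(Real.pi:ℂ)))*7,2,2,0), ((15/(64*(Real.pi:ℂ))),0,2,0)] ?_).trans ?_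
  · intro ξ
    have hq := qconj ((ξ:E3) 0)
    have hI := Complex.I_sq
    simp only [pfun, Matrix.cons_val_two, Matrix.tail_cons, Matrix.head_cons, mon, List.map_cons, List.sum_cons,
      List.map_nil, List.sum_nil, add_zero, pow_zero, pow_one, mul_one, one_mul]
    simp only [map_mul (starRingEnd ℂ), map_sub (starRingEnd ℂ), map_add (starRingEnd ℂ),
    map_pow (starRingEnd ℂ), map_one (starRingEnd ℂ), conj_ofReal, conj_I]
    linear_combination ((((ξ:E3) 0:ℂ)*((ξ:E3) 2:ℂ) + I*((ξ:E3) 1:ℂ))*(((ξ:E3) 0:ℂ)*((ξ:E3) 2:ℂ) - I*((ξ:E3) 1:ℂ))) * hq + (-(15/(64*(Real.pi:ℂ)))*(1+7*((ξ:E3) 0:ℂ)^2)*((ξ:E3) 1:ℂ)^2) * hI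
  · simp only [List.map_cons, List.sum_cons, List.map_nil, List.sum_nil, add_zero]
    rw [Sm402, Sm202, Sm220, Sm020]
    push_cast
    have hπ : (Real.pi:ℂ) ≠ 0 := Complex.ofReal_ne_zero.2 Real.pi_ne_zero
    linear_combination mul_inv_cancel₀ hπ

lemma case01 :
    ∫ ξ : sphere (0 : E3) 1,
        pfun (fun i => (ξ : E3) i) 0 * (starRingEnd ℂ) (pfun (fun i => (ξ : E3) i) 1)
        ∂(volume.toSphere) = 0 := by
  refine (main_case 0 1 [((15/(64*(Real.pi:ℂ)))*7,5,1,0), (-(15/(64*(Real.pi:ℂ)))*6,3,1,0), (-(15/(64*(Real.pi:ℂ))),1,1,0), ((15/(64*(Real.pi:ℂ)))*7*I,4,0,1), (-(15/(64*(Real.pi:ℂ)))*6*I,2,0,1), (-(15/(64*(Real.pi:ℂ)))*I,0,0,1)] ?_).trans ?_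
  · intro ξ
    have hq := qconj ((ξ:E3) 0)
    have hI := Complex.I_sq
    simp only [pfun, Matrix.cons_val_zero, Matrix.cons_val_one, Matrix.head_cons, mon, List.map_cons, List.sum_cons,
      List.map_nil, List.sum_nil, add_zero, pow_zero, pow_one, mul_one, one_mul]
    simp only [map_mul (starRingEnd ℂ), map_sub (starRingEnd ℂ), map_add (starRingEnd ℂ),
    map_pow (starRingEnd ℂ), map_one (starRingEnd ℂ), conj_ofReal, conj_I]
    linear_combination ((((ξ:E3) 0:ℂ)^2 - 1)*(((ξ:E3) 0:ℂ)*((ξ:E3) 1:ℂ) + I*((ξ:E3) 2:ℂ))) * hq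
  · simp only [List.map_cons, List.sum_cons, List.map_nil, List.sum_nil, add_zero]
    rw [Sm_odd_b 5 (by norm_num [Nat.odd_iff] : Odd 1) 0, Sm_odd_b 3 (by norm_num [Nat.odd_iff] : Odd 1) 0, Sm_odd_b 1 (by norm_num [Nat.odd_iff] : Odd 1) 0,
      Sm_odd_c 4 0 (by norm_num [Nat.odd_iff] : Odd 1), Sm_odd_c 2 0 (by norm_num [Nat.odd_iff] : Odd 1), Sm_odd_c 0 0 (by norm_num [Nat.odd_iff] : Odd 1)]
    push_cast
    ring

lemma case02 :
    ∫ ξ : sphere (0 : E3) 1,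
        pfun (fun i => (ξ : E3) i) 0 * (starRingEnd ℂ) (pfun (fun i => (ξ : E3) i) 2)
        ∂(volume.toSphere) = 0 := by
  refine (main_case 0 2 [((15/(64*(Real.pi:ℂ)))*7,5,0,1), (-(15/(64*(Real.pi:ℂ)))*6,3,0,1), (-(15/(64*(Real.pi:ℂ))),1,0,1), (-(15/(64*(Real.pi:ℂ)))*7*I,4,1,0), ((15/(64*(Real.pi:ℂ)))*6*I,2,1,0), ((15/(64*(Real.pi:ℂ)))*I,0,1,0)] ?_).trans ?_
  · intro ξ
    have hq := qconj ((ξ:E3) 0)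
    have hI := Complex.I_sq
    simp only [pfun, Matrix.cons_val_zero, Matrix.cons_val_two, Matrix.tail_cons, Matrix.head_cons, mon, List.map_cons, List.sum_cons,
      List.map_nil, List.sum_nil, add_zero, pow_zero, pow_one, mul_one, one_mul]
    simp only [map_mul (starRingEnd ℂ), map_sub (starRingEnd ℂ), map_add (starRingEnd ℂ),
    map_pow (starRingEnd ℂ), map_one (starRingEnd ℂ), conj_ofReal, conj_I]
    linear_combination ((((ξ:E3) 0:ℂ)^2 - 1)*(((ξ:E3) 0:ℂ)*((ξ:E3) 2:ℂ) - I*((ξ:E3) 1:ℂ))) * hq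
  · simp only [List.map_cons, List.sum_cons, List.map_nil, List.sum_nil, add_zero]
    rw [Sm_odd_c 5 0 (by norm_num [Nat.odd_iff] : Odd 1), Sm_odd_c 3 0 (by norm_num [Nat.odd_iff] : Odd 1), Sm_odd_c 1 0 (by norm_num [Nat.odd_iff] : Odd 1),
      Sm_odd_b 4 (by norm_num [Nat.odd_iff] : Odd 1) 0, Sm_odd_b 2 (by norm_num [Nat.odd_iff] : Odd 1) 0, Sm_odd_b 0 (by norm_num [Nat.odd_iff] : Odd 1) 0]
    push_cast
    ring

lemma case12 :
    ∫ ξ : sphere (0 : E3) 1,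
        pfun (fun i => (ξ : E3) i) 1 * (starRingEnd ℂ) (pfun (fun i => (ξ : E3) i) 2)
        ∂(volume.toSphere) = 0 := by
  refine (main_case 1 2 [((15/(64*(Real.pi:ℂ)))*7,4,1,1), ((15/(64*(Real.pi:ℂ))),2,1,1), (-(15/(64*(Real.pi:ℂ)))*7,2,1,1), (-(15/(64*(Real.pi:ℂ))),0,1,1), (-(15/(64*(Real.pi:ℂ)))*7*I,3,2,0), (-(15/(64*(Real.pi:ℂ)))*I,1,2,0), (-(15/(64*(Real.pi:ℂ)))*7*I,3,0,2), (-(15/(64*(Real.pi:ℂ)))*I,1,0,2)] ?_).trans ?_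
  · intro ξ
    have hq := qconj ((ξ:E3) 0)
    have hI := Complex.I_sq
    simp only [pfun, Matrix.cons_val_one, Matrix.cons_val_zero, Matrix.cons_val_two, Matrix.tail_cons, Matrix.head_cons, mon, List.map_cons, List.sum_cons,
      List.map_nil, List.sum_nil, add_zero, pow_zero, pow_one, mul_one, one_mul]
    simp only [map_mul (starRingEnd ℂ), map_sub (starRingEnd ℂ), map_add (starRingEnd ℂ),
    map_pow (starRingEnd ℂ), map_one (starRingEnd ℂ), conj_ofReal, conj_I]
    linear_combination ((((ξ:E3) 0:ℂ)*((ξ:E3) 1:ℂ) - I*((ξ:E3) 2:ℂ))*(((ξ:E3) 0:ℂ)*((ξ:E3) 2:ℂ) - I*((ξ:E3) 1:ℂ))) * hq + ((15/(64*(Real.pi:ℂ)))*(1+7*((ξ:E3) 0:ℂ)^2)*((ξ:E3) 1:ℂ)*((ξ:E3) 2:ℂ)) * hI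
  · simp only [List.map_cons, List.sum_cons, List.map_nil, List.sum_nil, add_zero]
    rw [Sm_odd_b 4 (by norm_num [Nat.odd_iff] : Odd 1) 1, Sm_odd_b 2 (by norm_num [Nat.odd_iff] : Odd 1) 1, Sm_odd_b 0 (by norm_num [Nat.odd_iff] : Odd 1) 1,
      Sm_odd_a (by norm_num [Nat.odd_iff] : Odd 3) 2 0, Sm_odd_a (by norm_num [Nat.odd_iff] : Odd 1) 2 0, Sm_odd_a (by norm_num [Nat.odd_iff] : Odd 3) 0 2, Sm_odd_a (by norm_num [Nat.odd_iff] : Odd 1) 0 2]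
    push_cast
    ring

lemma swap_case (j k : Fin 3) :
    ∫ ξ : sphere (0 : E3) 1,
        pfun (fun i => (ξ : E3) i) k * (starRingEnd ℂ) (pfun (fun i => (ξ : E3) i) j)
        ∂(volume.toSphere)
      = (starRingEnd ℂ) (∫ ξ : sphere (0 : E3) 1,
          pfun (fun i => (ξ : E3) i) j * (starRingEnd ℂ) (pfun (fun i => (ξ : E3) i) k)
          ∂(volume.toSphere)) := by
  rw [← integral_conj]
  refine integral_congr_ae (Filter.Eventually.of_forall fun ξ => ?_)
  simp only [map_mul (starRingEnd ℂ), Complex.conj_conj]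
  ring

end

end Stmt6Aux

/-- `∫_{S²} p_j(ξ) conj(p_k(ξ)) dσ(ξ) = δ_{jk}`, where `dσ` is the surface measure on the
unit sphere of `ℝ³` (realized as `volume.toSphere`). -/
theorem stmt6 (j k : Fin 3) :
    ∫ ξ : Metric.sphere (0 : EuclideanSpace ℝ (Fin 3)) 1,
        pfun (fun i => (ξ : EuclideanSpace ℝ (Fin 3)) i) j *
          (starRingEnd ℂ) (pfun (fun i => (ξ : EuclideanSpace ℝ (Fin 3)) i) k)
        ∂(volume.toSphere) =
      if j = k then 1 else 0 := by
  fin_cases j <;> fin_cases k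
  · exact Stmt6Aux.case00.trans (by norm_num [Fin.ext_iff])
  · exact Stmt6Aux.case01.trans (by norm_num [Fin.ext_iff])
  · exact Stmt6Aux.case02.trans (by norm_num [Fin.ext_iff])
  · exact ((Stmt6Aux.swap_case 0 1).trans (by rw [Stmt6Aux.case01, map_zero])).trans (by norm_num [Fin.ext_iff])
  · exact Stmt6Aux.case11.trans (by norm_num [Fin.ext_iff])
  · exact Stmt6Aux.case12.trans (by norm_num [Fin.ext_iff])
  · exact ((Stmt6Aux.swap_case 0 2).trans (by rw [Stmt6Aux.case02, map_zero])).trans (by norm_num [Fin.ext_iff])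
  · exact ((Stmt6Aux.swap_case 1 2).trans (by rw [Stmt6Aux.case12, map_zero])).trans (by norm_num [Fin.ext_iff])
  · exact Stmt6Aux.case22.trans (by norm_num [Fin.ext_iff])
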